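/- Let ℓ : [0,∞) → [0,∞) be a convex nondecreasing function and μ a Borel probability measure on ℝ whose support is contained in a compact interval, and let φ(α) = ∫_ℝ ℓ(|α − x|) dμ(x). Then for every α ∈ ℝ, φ has a (finite) right derivative at α equal to ∫_{(−∞,α]} ℓ'₊(α − x) dμ(x) − ∫_{(α,∞)} ℓ'₋(x − α) dμ(x), and a (finite) left derivative at α equal to −( ∫_{[α,∞)} ℓ'₊(x − α) dμ(x) − ∫_{(−∞,α)} ℓ'₋(α − x) dμ(x) ). -/

import Mathlib

open MeasureTheory

open MeasureTheory Set Filter Topology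

namespace Stmt8Aux

variable {ℓ : ℝ → ℝ}

lemma slope_mono (hc : ConvexOn ℝ (Set.Ici 0) ℓ) {a x y : ℝ} (ha : 0 ≤ a) (hx : 0 ≤ x)
    (hy : 0 ≤ y) (hxa : x ≠ a) (hya : y ≠ a) (hxy : x ≤ y) : slope ℓ a x ≤ slope ℓ a y := by
  simpa [slope_def_field] using hc.secant_mono ha hx hy hxa hya hxy

/-- right derivative is at most the slope to any point to the right -/
lemma rd_le_slope (hc : ConvexOn ℝ (Set.Ici 0) ℓ) {z w p : ℝ} (hz : 0 ≤ z) (hzw : z < w)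
    (h : HasDerivWithinAt ℓ p (Set.Ici z) z) : p ≤ slope ℓ z w := by
  have ht := hasDerivWithinAt_iff_tendsto_slope.1 h
  rw [Set.Ici_sdiff_left] at ht
  refine le_of_tendsto ht ?_
  filter_upwards [Ioo_mem_nhdsGT hzw] with u hu
  exact slope_mono hc hz (by linarith [hu.1]) (by linarith) (ne_of_gt hu.1) (ne_of_gt hzw) hu.2.le

/-- slope from a point on the left is at most the right derivative -/
lemma slope_le_rd (hc : ConvexOn ℝ (Set.Ici 0) ℓ) {z w p : ℝ} (hw : 0 ≤ w) (hzw : w < z)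
    (h : HasDerivWithinAt ℓ p (Set.Ici z) z) : slope ℓ z w ≤ p := by
  have ht := hasDerivWithinAt_iff_tendsto_slope.1 h
  rw [Set.Ici_sdiff_left] at ht
  refine ge_of_tendsto ht ?_
  filter_upwards [Ioo_mem_nhdsGT (lt_add_one z)] with u hu
  exact slope_mono hc (le_trans hw hzw.le) hw (by linarith [hu.1]) (ne_of_lt hzw)
    (ne_of_gt hu.1) (by linarith [hu.1])

lemma ld_le_slope (hc : ConvexOn ℝ (Set.Ici 0) ℓ) {z w p : ℝ} (hz : 0 < z) (hzw : z < w)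
    (h : HasDerivWithinAt ℓ p (Set.Iic z) z) : p ≤ slope ℓ z w := by
  have ht := hasDerivWithinAt_iff_tendsto_slope.1 h
  rw [Set.Iic_diff_right] at ht
  refine le_of_tendsto ht ?_
  filter_upwards [Ioo_mem_nhdsLT hz] with u hu
  exact slope_mono hc hz.le hu.1.le (by linarith) (ne_of_lt hu.2) (ne_of_gt hzw)
    (by linarith [hu.2])

lemma slope_le_ld (hc : ConvexOn ℝ (Set.Ici 0) ℓ) {z w p : ℝ} (hw : 0 ≤ w) (hzw : w < z)
    (h : HasDerivWithinAt ℓ p (Set.Iic z) z) : slope ℓ z w ≤ p := by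
  have ht := hasDerivWithinAt_iff_tendsto_slope.1 h
  rw [Set.Iic_diff_right] at ht
  refine ge_of_tendsto ht ?_
  filter_upwards [Ioo_mem_nhdsLT hzw] with u hu
  exact slope_mono hc (by linarith [hzw, hw]) hw (le_trans hw hu.1.le) (ne_of_lt hzw) (ne_of_lt hu.2) hu.1.le

lemma slope_nonneg (hm : MonotoneOn ℓ (Set.Ici 0)) {a b : ℝ} (ha : 0 ≤ a) (hab : a < b) :
    0 ≤ slope ℓ a b := by
  rw [slope_def_field]
  apply div_nonneg _ (by linarith)
  have := hm (by exact ha) (show b ∈ Set.Ici (0:ℝ) by simp; linarith) hab.le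
  linarith

lemma rd_nonneg (hm : MonotoneOn ℓ (Set.Ici 0)) {z p : ℝ} (hz : 0 ≤ z)
    (h : HasDerivWithinAt ℓ p (Set.Ici z) z) : 0 ≤ p := by
  have ht := hasDerivWithinAt_iff_tendsto_slope.1 h
  rw [Set.Ici_sdiff_left] at ht
  refine ge_of_tendsto ht ?_
  filter_upwards [self_mem_nhdsWithin] with u hu
  exact slope_nonneg hm hz hu

lemma ld_nonneg (hm : MonotoneOn ℓ (Set.Ici 0)) {z p : ℝ} (hz : 0 < z)
    (h : HasDerivWithinAt ℓ p (Set.Iic z) z) : 0 ≤ p := by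
  have ht := hasDerivWithinAt_iff_tendsto_slope.1 h
  rw [Set.Iic_diff_right] at ht
  refine ge_of_tendsto ht ?_
  filter_upwards [Ioo_mem_nhdsLT hz] with u hu
  rw [slope_comm]
  exact slope_nonneg hm hu.1.le hu.2

/-- Lipschitz bound on `[0, C]` with constant `ℓ (C+1)`. -/
lemma lip (hc : ConvexOn ℝ (Set.Ici 0) ℓ) (hm : MonotoneOn ℓ (Set.Ici 0))
    (hn : ∀ z ∈ Set.Ici (0:ℝ), 0 ≤ ℓ z) {C u v : ℝ} (hu : 0 ≤ u) (huv : u ≤ v) (hv : v ≤ C) :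
    ℓ v - ℓ u ≤ ℓ (C + 1) * (v - u) := by
  rcases eq_or_lt_of_le huv with rfl | huv
  · simp
  have hv0 : 0 ≤ v := le_trans hu huv.le
  have hC1 : v < C + 1 := by linarith
  have h1 : slope ℓ u v ≤ slope ℓ u (C + 1) :=
    slope_mono hc hu hv0 (by linarith) (ne_of_gt huv) (ne_of_gt (show u < C + 1 by linarith)) (by linarith)
  have h2 : slope ℓ u (C + 1) ≤ ℓ (C + 1) := by
    rw [slope_def_field]
    have hnum : ℓ (C + 1) - ℓ u ≤ ℓ (C + 1) := by
      have := hn u hu; linarith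
    have hden : (1:ℝ) ≤ C + 1 - u := by linarith
    have hnum0 : 0 ≤ ℓ (C + 1) - ℓ u :=
      sub_nonneg.2 (hm hu (by simp; linarith) (by linarith))
    calc (ℓ (C + 1) - ℓ u) / (C + 1 - u) ≤ (ℓ (C + 1) - ℓ u) / 1 := by
          apply div_le_div_of_nonneg_left hnum0 one_pos hden
        _ ≤ ℓ (C + 1) := by rw [div_one]; exact hnum
  have h3 : slope ℓ u v = (ℓ v - ℓ u) / (v - u) := slope_def_field ℓ u v
  have h4 : (ℓ v - ℓ u) / (v - u) ≤ ℓ (C + 1) := by rw [← h3]; exact le_trans h1 h2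
  calc ℓ v - ℓ u = (ℓ v - ℓ u) / (v - u) * (v - u) :=
        (div_mul_cancel₀ _ (ne_of_gt (sub_pos.2 huv))).symm
    _ ≤ ℓ (C + 1) * (v - u) := by
        apply mul_le_mul_of_nonneg_right h4 (by linarith)


lemma lip_abs (hc : ConvexOn ℝ (Set.Ici 0) ℓ) (hm : MonotoneOn ℓ (Set.Ici 0))
    (hn : ∀ z ∈ Set.Ici (0:ℝ), 0 ≤ ℓ z) {C u v : ℝ} (hu : 0 ≤ u) (hv : 0 ≤ v)
    (huC : u ≤ C) (hvC : v ≤ C) : |ℓ v - ℓ u| ≤ ℓ (C + 1) * |v - u| := by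
  rcases le_total u v with h | h
  · rw [abs_of_nonneg (sub_nonneg.2 (hm (Set.mem_Ici.2 hu) (Set.mem_Ici.2 hv) h)),
      abs_of_nonneg (sub_nonneg.2 h)]
    exact lip hc hm hn hu h hvC
  · rw [abs_sub_comm, abs_sub_comm v u,
      abs_of_nonneg (sub_nonneg.2 (hm (Set.mem_Ici.2 hv) (Set.mem_Ici.2 hu) h)),
      abs_of_nonneg (sub_nonneg.2 h)]
    exact lip hc hm hn hv h huC

lemma core (ℓ : ℝ → ℝ)
    (h_convex : ConvexOn ℝ (Set.Ici 0) ℓ)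
    (h_mono : MonotoneOn ℓ (Set.Ici 0))
    (h_nonneg : ∀ z ∈ Set.Ici (0 : ℝ), 0 ≤ ℓ z)
    (ℓp ℓm : ℝ → ℝ)
    (h_right : ∀ z, 0 ≤ z → HasDerivWithinAt ℓ (ℓp z) (Set.Ici z) z)
    (h_left : ∀ z, 0 < z → HasDerivWithinAt ℓ (ℓm z) (Set.Iic z) z)
    (μ : Measure ℝ) [IsProbabilityMeasure μ]
    (A B : ℝ) (hsupp : μ (Set.Icc A B) = 1) (α : ℝ) :
    HasDerivWithinAt (fun β : ℝ => ∫ x, ℓ |β - x| ∂μ)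
      ((∫ x in Set.Iic α, ℓp (α - x) ∂μ) - ∫ x in Set.Ioi α, ℓm (x - α) ∂μ)
      (Set.Ici α) α := by
  have hae : ∀ᵐ x ∂μ, x ∈ Set.Icc A B := by
    rw [ae_iff]
    have h0 : {x : ℝ | ¬ x ∈ Set.Icc A B} = (Set.Icc A B)ᶜ := rfl
    rw [h0, measure_compl measurableSet_Icc (measure_ne_top μ _), hsupp, measure_univ]
    simp
  set C : ℝ := |α - A| + |α - B| + 1 with hCdef
  have habsA := abs_nonneg (α - A)
  have habsB := abs_nonneg (α - B)
  have hC1 : 1 ≤ C := by rw [hCdef]; linarith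
  have hxC : ∀ x ∈ Set.Icc A B, |α - x| ≤ C - 1 := by
    intro x hx
    have h1 := hx.1; have h2 := hx.2
    have h3 := le_abs_self (α - A); have h4 := neg_abs_le (α - B)
    rw [abs_le, hCdef]
    constructor <;> linarith
  set K : ℝ := ℓ (C + 1) with hKdef
  have hK0 : 0 ≤ K := h_nonneg _ (Set.mem_Ici.2 (by linarith))
  have hp_le : ∀ z : ℝ, 0 ≤ z → z ≤ C → ℓp z ≤ K := by
    intro z hz hzC
    have h1 := rd_le_slope h_convex hz (lt_add_one z) (h_right z hz)
    rw [slope_def_field] at h1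
    have h2 : ℓ (z + 1) ≤ K :=
      h_mono (Set.mem_Ici.2 (by linarith)) (Set.mem_Ici.2 (by linarith)) (by linarith)
    have h3 := h_nonneg z (Set.mem_Ici.2 hz)
    have h4 : (ℓ (z + 1) - ℓ z) / (z + 1 - z) = ℓ (z + 1) - ℓ z := by norm_num
    rw [h4] at h1
    linarith
  have hm_le : ∀ z : ℝ, 0 < z → z ≤ C → ℓm z ≤ K := by
    intro z hz hzC
    have h1 := ld_le_slope h_convex hz (lt_add_one z) (h_left z hz)
    rw [slope_def_field] at h1
    have h2 : ℓ (z + 1) ≤ K :=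
      h_mono (Set.mem_Ici.2 (by linarith)) (Set.mem_Ici.2 (by linarith)) (by linarith)
    have h3 := h_nonneg z (Set.mem_Ici.2 hz.le)
    have h4 : (ℓ (z + 1) - ℓ z) / (z + 1 - z) = ℓ (z + 1) - ℓ z := by norm_num
    rw [h4] at h1
    linarith
  have hpmono : MonotoneOn ℓp (Set.Ici 0) := by
    intro a ha b hb hab
    rcases eq_or_lt_of_le hab with rfl | hab
    · exact le_refl _
    have ha' := Set.mem_Ici.1 ha
    have h1 := rd_le_slope h_convex ha' hab (h_right a ha')
    have h2 := slope_le_rd h_convex ha' hab (h_right b (le_trans ha' hab.le))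
    rw [slope_comm] at h2
    exact le_trans h1 h2
  have hmmono : MonotoneOn ℓm (Set.Ioi 0) := by
    intro a ha b hb hab
    rcases eq_or_lt_of_le hab with rfl | hab
    · exact le_refl _
    have ha' := Set.mem_Ioi.1 ha
    have h1 := ld_le_slope h_convex ha' hab (h_left a ha')
    have h2 := slope_le_ld h_convex ha'.le hab (h_left b (lt_trans ha' hab))
    rw [slope_comm] at h2
    exact le_trans h1 h2
  have hp0m : ∀ z : ℝ, 0 < z → ℓp 0 ≤ ℓm z := by
    intro z hz
    have h1 := rd_le_slope h_convex le_rfl hz (h_right 0 le_rfl)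
    have h2 := slope_le_ld h_convex le_rfl hz (h_left z hz)
    rw [slope_comm] at h2
    exact le_trans h1 h2
  set p' : ℝ → ℝ := fun z => ℓp (max z 0) with hp'def
  have hp'mono : Monotone p' := fun a b hab =>
    hpmono (Set.mem_Ici.2 (le_max_right a 0)) (Set.mem_Ici.2 (le_max_right b 0))
      (max_le_max hab le_rfl)
  set m' : ℝ → ℝ := fun z => if z ≤ 0 then ℓp 0 else ℓm z with hm'def
  have hm'mono : Monotone m' := by
    intro a b hab
    simp only [hm'def]
    by_cases hb : b ≤ 0
    · rw [if_pos (le_trans hab hb), if_pos hb]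
    · push_neg at hb
      rw [if_neg (not_le.2 hb)]
      by_cases ha : a ≤ 0
      · rw [if_pos ha]; exact hp0m b hb
      · push_neg at ha
        rw [if_neg (not_le.2 ha)]
        exact hmmono (Set.mem_Ioi.2 ha) (Set.mem_Ioi.2 hb) hab
  have hp'meas : Measurable p' := hp'mono.measurable
  have hm'meas : Measurable m' := hm'mono.measurable
  set lt' : ℝ → ℝ := fun z => ℓ (max z 0) with hlt'def
  have hlt'mono : Monotone lt' := fun a b hab =>
    h_mono (Set.mem_Ici.2 (le_max_right a 0)) (Set.mem_Ici.2 (le_max_right b 0))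
      (max_le_max hab le_rfl)
  have hlt'meas : Measurable lt' := hlt'mono.measurable
  have hmeasf : ∀ γ : ℝ, AEStronglyMeasurable (fun x => ℓ |γ - x|) μ := by
    intro γ
    have h1 : (fun x : ℝ => ℓ |γ - x|) = fun x => lt' |γ - x| := by
      funext x; simp [hlt'def, max_eq_left (abs_nonneg (γ - x))]
    rw [h1]
    exact (hlt'meas.comp ((measurable_const.sub measurable_id).abs)).aestronglyMeasurable
  have hintf : ∀ γ : ℝ, |γ - α| ≤ 1 → Integrable (fun x => ℓ |γ - x|) μ := by
    intro γ hγ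
    refine Integrable.mono' (integrable_const K) (hmeasf γ) ?_
    filter_upwards [hae] with x hx
    have h1 := hxC x hx
    have h2 : |γ - x| ≤ C := by
      have h3 : |γ - x| ≤ |γ - α| + |α - x| := by
        rw [show γ - x = (γ - α) + (α - x) by ring]; exact abs_add_le _ _
      linarith
    rw [Real.norm_eq_abs, abs_of_nonneg (h_nonneg _ (Set.mem_Ici.2 (abs_nonneg _)))]
    exact h_mono (Set.mem_Ici.2 (abs_nonneg _)) (Set.mem_Ici.2 (by linarith)) (by linarith)
  set D : ℝ → ℝ := fun x => if x ≤ α then p' (α - x) else -(m' (x - α)) with hDdef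
  have hDmeas : Measurable D := Measurable.ite measurableSet_Iic
    (hp'meas.comp (measurable_const.sub measurable_id))
    ((hm'meas.comp (measurable_id.sub measurable_const)).neg)
  have hDval1 : ∀ x : ℝ, x ≤ α → D x = ℓp (α - x) := by
    intro x hx
    simp only [hDdef, if_pos hx, hp'def, max_eq_left (by linarith : (0:ℝ) ≤ α - x)]
  have hDval2 : ∀ x : ℝ, α < x → D x = -(ℓm (x - α)) := by
    intro x hx
    simp only [hDdef, if_neg (not_le.2 hx), hm'def,
      if_neg (not_le.2 (by linarith : (0:ℝ) < x - α))]
  have hDle : ∀ x ∈ Set.Icc A B, ‖D x‖ ≤ K := by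
    intro x hx
    have hxc := hxC x hx
    rw [Real.norm_eq_abs]
    by_cases h : x ≤ α
    · rw [hDval1 x h]
      have h0 : (0:ℝ) ≤ α - x := by linarith
      have h5 : α - x ≤ C := le_trans (le_abs_self _) (by linarith)
      rw [abs_of_nonneg (rd_nonneg h_mono h0 (h_right _ h0))]
      exact hp_le _ h0 h5
    · push_neg at h
      rw [hDval2 x h, abs_neg]
      have h0 : (0:ℝ) < x - α := by linarith
      have h5 : x - α ≤ C := by
        have := neg_abs_le (α - x); linarith
      rw [abs_of_nonneg (ld_nonneg h_mono h0 (h_left _ h0))]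
      exact hm_le _ h0 h5
  have hDint : Integrable D μ := by
    refine Integrable.mono' (integrable_const K) hDmeas.aestronglyMeasurable ?_
    filter_upwards [hae] with x hx using hDle x hx
  have h1 : ∫ x in Set.Iic α, D x ∂μ = ∫ x in Set.Iic α, ℓp (α - x) ∂μ :=
    setIntegral_congr_fun measurableSet_Iic (fun x hx => hDval1 x (Set.mem_Iic.1 hx))
  have h2 : ∫ x in Set.Ioi α, D x ∂μ = - ∫ x in Set.Ioi α, ℓm (x - α) ∂μ := by
    rw [← integral_neg]
    exact setIntegral_congr_fun measurableSet_Ioi (fun x hx => hDval2 x (Set.mem_Ioi.1 hx))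
  have hsplit : ∫ x, D x ∂μ
      = (∫ x in Set.Iic α, ℓp (α - x) ∂μ) - ∫ x in Set.Ioi α, ℓm (x - α) ∂μ := by
    rw [← integral_add_compl measurableSet_Iic hDint, Set.compl_Iic, h1, h2]
    ring
  have hptwise : ∀ x : ℝ, HasDerivWithinAt (fun β => ℓ |β - x|) (D x) (Set.Ici α) α := by
    intro x
    by_cases hxα : x ≤ α
    · have h0 : (0:ℝ) ≤ α - x := by linarith
      have hcomp : HasDerivWithinAt (ℓ ∘ (fun β : ℝ => β - x)) (ℓp (α - x) * 1)
          (Set.Ici α) α :=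
        HasDerivWithinAt.comp α (h_right _ h0) ((hasDerivWithinAt_id α _).sub_const x)
          (fun β hβ => by
            simp only [Set.mem_Ici] at *
            linarith)
      have hres := hcomp.congr (fun β hβ => show ℓ |β - x| = (ℓ ∘ fun b : ℝ => b - x) β by
          simp only [Function.comp_apply]
          rw [abs_of_nonneg (by simp only [Set.mem_Ici] at hβ; linarith : (0:ℝ) ≤ β - x)])
        (show ℓ |α - x| = (ℓ ∘ fun b : ℝ => b - x) α by
          simp only [Function.comp_apply]; rw [abs_of_nonneg h0])
      rw [hDval1 x hxα]
      simpa using hres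
    · push_neg at hxα
      have h0 : (0:ℝ) < x - α := by linarith
      have hmem : Set.Ici α ∩ Set.Iic x ∈ 𝓝[Set.Ici α] α :=
        inter_mem self_mem_nhdsWithin (mem_nhdsWithin_of_mem_nhds (Iic_mem_nhds hxα))
      have hinner : HasDerivWithinAt (fun β : ℝ => x - β) (-1)
          (Set.Ici α ∩ Set.Iic x) α := by
        simpa using (hasDerivWithinAt_id α (Set.Ici α ∩ Set.Iic x)).const_sub x
      have hmaps : Set.MapsTo (fun β : ℝ => x - β) (Set.Ici α ∩ Set.Iic x)
          (Set.Iic (x - α)) := fun β hβ => by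
        have := hβ.1
        simp only [Set.mem_Ici, Set.mem_Iic] at *
        linarith
      have hcomp := HasDerivWithinAt.comp α (h_left _ h0) hinner hmaps
      have hres := hcomp.congr (fun β hβ => show ℓ |β - x| = (ℓ ∘ fun b : ℝ => x - b) β by
          simp only [Function.comp_apply]
          rw [abs_sub_comm, abs_of_nonneg (by
            have := hβ.2; simp only [Set.mem_Iic] at this; linarith : (0:ℝ) ≤ x - β)])
        (show ℓ |α - x| = (ℓ ∘ fun b : ℝ => x - b) α by
          simp only [Function.comp_apply]
          rw [abs_sub_comm, abs_of_nonneg (by linarith : (0:ℝ) ≤ x - α)])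
      have hres2 := hres.mono_of_mem_nhdsWithin hmem
      rw [hDval2 x hxα]
      have : ℓm (x - α) * (-1) = -(ℓm (x - α)) := by ring
      rwa [this] at hres2
  have hIoc : Set.Ioc α (α + 1) ∈ 𝓝[>] α := Ioc_mem_nhdsGT (lt_add_one α)
  have hslope_bound : ∀ᶠ β in 𝓝[>] α,
      ∀ᵐ x ∂μ, ‖(ℓ |β - x| - ℓ |α - x|) / (β - α)‖ ≤ K := by
    filter_upwards [hIoc] with β hβ
    filter_upwards [hae] with x hx
    have h1 := hxC x hx
    have hβα : 0 < β - α := by linarith [hβ.1]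
    have hβ1 : β - α ≤ 1 := by linarith [hβ.2]
    have h2 : |β - x| ≤ C := by
      have h3 : |β - x| ≤ |β - α| + |α - x| := by
        rw [show β - x = (β - α) + (α - x) by ring]; exact abs_add_le _ _
      rw [abs_of_pos hβα] at h3
      linarith
    rw [Real.norm_eq_abs, abs_div, abs_of_pos hβα, div_le_iff₀ hβα]
    calc abs (ℓ |β - x| - ℓ |α - x|) ≤ K * abs (|β - x| - |α - x|) :=
          lip_abs h_convex h_mono h_nonneg (abs_nonneg _) (abs_nonneg _) (by linarith) h2
      _ ≤ K * (β - α) := by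
          apply mul_le_mul_of_nonneg_left _ hK0
          calc abs (|β - x| - |α - x|) ≤ |(β - x) - (α - x)| := abs_abs_sub_abs_le_abs_sub _ _
            _ = β - α := by rw [show (β - x) - (α - x) = β - α by ring, abs_of_pos hβα]
  have hlim : ∀ x : ℝ, Tendsto (fun β => (ℓ |β - x| - ℓ |α - x|) / (β - α))
      (𝓝[>] α) (𝓝 (D x)) := by
    intro x
    have ht := hasDerivWithinAt_iff_tendsto_slope.1 (hptwise x)
    rw [Set.Ici_sdiff_left] at ht
    have heq : slope (fun b => ℓ |b - x|) α
        = fun β => (ℓ |β - x| - ℓ |α - x|) / (β - α) := by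
      funext β; rw [slope_def_field]
    rwa [heq] at ht
  have hDCT := tendsto_integral_filter_of_dominated_convergence (μ := μ)
    (F := fun (β : ℝ) (x : ℝ) => (ℓ |β - x| - ℓ |α - x|) / (β - α)) (f := D)
    (bound := fun _ => K)
    (Eventually.of_forall fun β => (((hmeasf β).sub (hmeasf α)).mul_const (β - α)⁻¹).congr (Eventually.of_forall fun x => (div_eq_mul_inv _ _).symm))
    hslope_bound (integrable_const K) (Eventually.of_forall fun x => hlim x)
  have heq2 : ∀ᶠ β in 𝓝[>] α, (∫ x, (ℓ |β - x| - ℓ |α - x|) / (β - α) ∂μ)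
      = slope (fun β : ℝ => ∫ x, ℓ |β - x| ∂μ) α β := by
    filter_upwards [hIoc] with β hβ
    have hβα : 0 < β - α := by linarith [hβ.1]
    have hβ1 : |β - α| ≤ 1 := by rw [abs_of_pos hβα]; linarith [hβ.2]
    rw [slope_def_field, integral_div,
      integral_sub (hintf β hβ1) (hintf α (by simp))]
  rw [hasDerivWithinAt_iff_tendsto_slope, Set.Ici_sdiff_left, ← hsplit]
  exact Tendsto.congr' heq2 hDCT

end Stmt8Aux



/-- Let `ℓ : [0,∞) → [0,∞)` be convex nondecreasing with one-sided derivative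
functions `ℓp` (right) and `ℓm` (left), and `μ` a Borel probability measure on `ℝ`
with support contained in a compact interval. Then `φ(α) = ∫ ℓ(|α − x|) dμ(x)` has
at every `α` a right derivative `∫_{(−∞,α]} ℓ'₊(α−x) dμ − ∫_{(α,∞)} ℓ'₋(x−α) dμ`
and a left derivative `−(∫_{[α,∞)} ℓ'₊(x−α) dμ − ∫_{(−∞,α)} ℓ'₋(α−x) dμ)`. -/
theorem stmt_8 (ℓ : ℝ → ℝ)
    (h_convex : ConvexOn ℝ (Set.Ici 0) ℓ)
    (h_mono : MonotoneOn ℓ (Set.Ici 0))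
    (h_nonneg : ∀ z ∈ Set.Ici (0 : ℝ), 0 ≤ ℓ z)
    (ℓp ℓm : ℝ → ℝ)
    (h_right : ∀ z, 0 ≤ z → HasDerivWithinAt ℓ (ℓp z) (Set.Ici z) z)
    (h_left : ∀ z, 0 < z → HasDerivWithinAt ℓ (ℓm z) (Set.Iic z) z)
    (μ : Measure ℝ) [IsProbabilityMeasure μ]
    (A B : ℝ) (hsupp : μ (Set.Icc A B) = 1) :
    ∀ α : ℝ,
      HasDerivWithinAt (fun β : ℝ => ∫ x, ℓ |β - x| ∂μ)
        ((∫ x in Set.Iic α, ℓp (α - x) ∂μ) - ∫ x in Set.Ioi α, ℓm (x - α) ∂μ)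
        (Set.Ici α) α ∧
      HasDerivWithinAt (fun β : ℝ => ∫ x, ℓ |β - x| ∂μ)
        (-((∫ x in Set.Ici α, ℓp (x - α) ∂μ) - ∫ x in Set.Iio α, ℓm (α - x) ∂μ))
        (Set.Iic α) α := by
  intro α
  constructor
  · exact Stmt8Aux.core ℓ h_convex h_mono h_nonneg ℓp ℓm h_right h_left μ A B hsupp α
  · have hneg : MeasurableEmbedding (fun x : ℝ => -x) :=
      (Homeomorph.neg ℝ).measurableEmbedding
    set ν : Measure ℝ := Measure.map (fun x : ℝ => -x) μ with hν
    have hprob : IsProbabilityMeasure ν := by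
      rw [hν]; exact Measure.isProbabilityMeasure_map measurable_neg.aemeasurable
    have hsupp' : ν (Set.Icc (-B) (-A)) = 1 := by
      rw [hν, hneg.map_apply]
      have hpre : (fun x : ℝ => -x) ⁻¹' Set.Icc (-B) (-A) = Set.Icc A B := by
        ext x
        simp only [Set.mem_preimage, Set.mem_Icc]
        constructor <;> intro h <;> constructor <;> linarith [h.1, h.2]
      rw [hpre, hsupp]
    have hcore := Stmt8Aux.core ℓ h_convex h_mono h_nonneg ℓp ℓm h_right h_left ν
      (-B) (-A) hsupp' (-α)
    have hinner : HasDerivWithinAt (fun β : ℝ => -β) (-1) (Set.Iic α) α := by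
      exact hasDerivWithinAt_neg α (Set.Iic α)
    have hmaps : Set.MapsTo (fun β : ℝ => -β) (Set.Iic α) (Set.Ici (-α)) := fun β hβ => by
      simp only [Set.mem_Iic, Set.mem_Ici] at *
      linarith
    have hcomp := HasDerivWithinAt.comp α hcore hinner hmaps
    have hfun : ∀ β : ℝ, ((fun γ : ℝ => ∫ y, ℓ |γ - y| ∂ν) ∘ (fun β : ℝ => -β)) β
        = ∫ x, ℓ |β - x| ∂μ := by
      intro β
      simp only [Function.comp_apply, hν]
      rw [hneg.integral_map]
      congr 1
      funext x
      rw [show -β - -x = -(β - x) by ring, abs_neg]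
    have hres := hcomp.congr (fun β _ => (hfun β).symm) ((hfun α).symm)
    have e1 : (∫ y in Set.Iic (-α), ℓp (-α - y) ∂ν) = ∫ x in Set.Ici α, ℓp (x - α) ∂μ := by
      rw [hν, hneg.setIntegral_map]
      have hpre : (fun x : ℝ => -x) ⁻¹' Set.Iic (-α) = Set.Ici α := by
        ext x
        simp only [Set.mem_preimage, Set.mem_Iic, Set.mem_Ici]
        constructor <;> intro h <;> linarith
      rw [hpre]
      simp only [show ∀ x : ℝ, -α - -x = x - α from fun x => by ring]
    have e2 : (∫ y in Set.Ioi (-α), ℓm (y - -α) ∂ν) = ∫ x in Set.Iio α, ℓm (α - x) ∂μ := by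
      rw [hν, hneg.setIntegral_map]
      have hpre : (fun x : ℝ => -x) ⁻¹' Set.Ioi (-α) = Set.Iio α := by
        ext x
        simp only [Set.mem_preimage, Set.mem_Ioi, Set.mem_Iio]
        constructor <;> intro h <;> linarith
      rw [hpre]
      simp only [show ∀ x : ℝ, -x - -α = α - x from fun x => by ring]
    have hval : ((∫ y in Set.Iic (-α), ℓp (-α - y) ∂ν)
        - ∫ y in Set.Ioi (-α), ℓm (y - -α) ∂ν) * (-1)
        = -((∫ x in Set.Ici α, ℓp (x - α) ∂μ) - ∫ x in Set.Iio α, ℓm (α - x) ∂μ) := by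
      rw [e1, e2]; ring
    rw [← hval]
    exact hres
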